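/- Let θ > 0 be irrational, let C > 1 be an integer, and let 0 < a < b < 1 with b − a < 1/3. Then there exist a positive integer K, a nonnegative integer r, and infinitely many natural numbers m such that {(K·C^m + r)·θ} < a and {(K·C^{m+1} + r)·θ} > b. -/

import Mathlib

open Set Filter Topology

open Set Filter Topology

/-- Walking upward in steps `ξ` hits any interval of length `> ξ` mod 1. -/
lemma hit_up (c u v ξ : ℝ) (hu : 0 ≤ u) (huv : u < v) (hv : v ≤ 1)
    (hξ : 0 < ξ) (hsmall : ξ < v - u) :
    ∃ j : ℕ, Int.fract (c + j * ξ) ∈ Set.Ioo u v := by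
  set c' := Int.fract c with hc'
  have hc0 : 0 ≤ c' := Int.fract_nonneg c
  have hc1 : c' < 1 := Int.fract_lt_one c
  set u' : ℝ := if c' ≤ u then u else 1 + u with hu'
  have hex : ∃ j : ℕ, u' < c' + j * ξ := by
    obtain ⟨n, hn⟩ := exists_nat_gt ((u' - c') / ξ)
    exact ⟨n, by rw [div_lt_iff₀ hξ] at hn; linarith⟩
  classical
  set j := Nat.find hex with hj
  have hjP : u' < c' + j * ξ := Nat.find_spec hex
  have hj1 : 1 ≤ j := by
    rcases Nat.eq_zero_or_pos j with h0 | h; swap; · exact h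
    exfalso
    rw [h0] at hjP; simp at hjP
    by_cases hcu : c' ≤ u
    · rw [hu', if_pos hcu] at hjP; linarith
    · rw [hu', if_neg hcu] at hjP; linarith
  have hmin : ¬ (u' < c' + ((j - 1 : ℕ)) * ξ) := Nat.find_min hex (by omega)
  push_neg at hmin
  have hcast : ((j - 1 : ℕ) : ℝ) = (j : ℝ) - 1 := by
    have : (1:ℕ) ≤ j := hj1; push_cast [this]; ring
  rw [hcast] at hmin
  have hub : c' + j * ξ ≤ u' + ξ := by nlinarith
  have hfr : Int.fract (c + j * ξ) = Int.fract (c' + j * ξ) := by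
    apply Int.fract_eq_fract.mpr
    exact ⟨⌊c⌋, by rw [hc']; unfold Int.fract; ring⟩
  by_cases hcu : c' ≤ u
  · rw [hu', if_pos hcu] at hjP hub
    have h01 : Int.fract (c' + j * ξ) = c' + j * ξ :=
      Int.fract_eq_self.mpr ⟨by linarith, by linarith⟩
    exact ⟨j, by rw [hfr, h01]; exact ⟨hjP, by linarith⟩⟩
  · rw [hu', if_neg hcu] at hjP hub
    refine ⟨j, ?_⟩
    have key : Int.fract (c' + j * ξ) = c' + j * ξ - 1 := by
      have := Int.fract_sub_intCast (c' + j * ξ) 1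
      rw [Int.cast_one] at this
      rw [← this]
      exact Int.fract_eq_self.mpr ⟨by linarith, by linarith⟩
    rw [hfr, key]
    constructor <;> linarith

/-- Walking downward in steps `ξ < 0` hits any interval of length `> -ξ` mod 1. -/
lemma hit_down (c u v ξ : ℝ) (hu : 0 ≤ u) (huv : u < v) (hv : v ≤ 1)
    (hξ : ξ < 0) (hsmall : -ξ < v - u) :
    ∃ j : ℕ, Int.fract (c + j * ξ) ∈ Set.Ioo u v := by
  set c' := Int.fract c with hc'
  have hc0 : 0 ≤ c' := Int.fract_nonneg c
  have hc1 : c' < 1 := Int.fract_lt_one c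
  set v' : ℝ := if v ≤ c' then v else v - 1 with hv'
  have hex : ∃ j : ℕ, c' + j * ξ < v' := by
    obtain ⟨n, hn⟩ := exists_nat_gt ((c' - v') / (-ξ))
    refine ⟨n, ?_⟩
    rw [div_lt_iff₀ (by linarith)] at hn; nlinarith
  classical
  set j := Nat.find hex with hj
  have hjP : c' + j * ξ < v' := Nat.find_spec hex
  have hj1 : 1 ≤ j := by
    rcases Nat.eq_zero_or_pos j with h0 | h; swap; · exact h
    exfalso
    rw [h0] at hjP; simp at hjP
    by_cases hcv : v ≤ c'
    · rw [hv', if_pos hcv] at hjP; linarith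
    · rw [hv', if_neg hcv] at hjP; linarith
  have hmin : ¬ (c' + ((j - 1 : ℕ)) * ξ < v') := Nat.find_min hex (by omega)
  push_neg at hmin
  have hcast : ((j - 1 : ℕ) : ℝ) = (j : ℝ) - 1 := by
    have : (1:ℕ) ≤ j := hj1; push_cast [this]; ring
  rw [hcast] at hmin
  have hlb : v' + ξ ≤ c' + j * ξ := by nlinarith
  have hfr : Int.fract (c + j * ξ) = Int.fract (c' + j * ξ) := by
    apply Int.fract_eq_fract.mpr
    exact ⟨⌊c⌋, by rw [hc']; unfold Int.fract; ring⟩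
  by_cases hcv : v ≤ c'
  · rw [hv', if_pos hcv] at hjP hlb
    have h01 : Int.fract (c' + j * ξ) = c' + j * ξ :=
      Int.fract_eq_self.mpr ⟨by linarith, by linarith⟩
    exact ⟨j, by rw [hfr, h01]; exact ⟨by linarith, hjP⟩⟩
  · rw [hv', if_neg hcv] at hjP hlb
    refine ⟨j, ?_⟩
    have key : Int.fract (c' + j * ξ) = c' + j * ξ + 1 := by
      have := Int.fract_add_intCast (c' + j * ξ) 1
      rw [Int.cast_one] at this
      rw [← this]
      exact Int.fract_eq_self.mpr ⟨by linarith, by linarith⟩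
    rw [hfr, key]
    constructor <;> linarith

/-- Walking in nonzero steps `ξ` with `|ξ|` smaller than an interval hits it mod 1. -/
lemma hit (c u v ξ : ℝ) (hu : 0 ≤ u) (huv : u < v) (hv : v ≤ 1)
    (hξ : ξ ≠ 0) (hsmall : |ξ| < v - u) :
    ∃ j : ℕ, Int.fract (c + j * ξ) ∈ Set.Ioo u v := by
  rcases hξ.lt_or_gt with h | h
  · exact hit_down c u v ξ hu huv hv h (by rwa [abs_of_neg h] at hsmall)
  · exact hit_up c u v ξ hu huv hv h (by rwa [abs_of_pos h] at hsmall)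

/-- The forward orbit of an irrational rotation, from any starting point, hits
any open subinterval of `[0,1]`. -/
lemma dense_nat_rotation (θ : ℝ) (hθ : Irrational θ) (c u v : ℝ)
    (hu : 0 ≤ u) (huv : u < v) (hv : v ≤ 1) :
    ∃ r : ℕ, Int.fract (c + r * θ) ∈ Set.Ioo u v := by
  obtain ⟨n, hn⟩ := exists_nat_gt (2 / (v - u))
  have hvu : 0 < v - u := by linarith
  have hn0 : 0 < n := by
    by_contra h
    push_neg at h
    interval_cases n
    · simp at hn; nlinarith [div_pos (by norm_num : (0:ℝ) < 2) hvu]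
  obtain ⟨p, q, hq0, hqn, hpq⟩ := Real.exists_int_int_abs_mul_sub_le θ hn0
  set ξ := (q : ℝ) * θ - p with hξdef
  have hξne : ξ ≠ 0 := by
    intro h
    have hq0' : (q : ℝ) ≠ 0 := by exact_mod_cast hq0.ne'
    have : θ = (p : ℝ) / q := by rw [eq_div_iff hq0']; linear_combination h - hξdef
    exact hθ ⟨(p : ℚ) / (q : ℚ), by push_cast; rw [this]⟩
  have hξsmall : |ξ| < v - u := by
    have h1 : (1 : ℝ) / (n + 1) < v - u := by
      rw [div_lt_iff₀ (by positivity)]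
      rw [div_lt_iff₀ hvu] at hn
      nlinarith
    exact lt_of_le_of_lt hpq h1
  obtain ⟨j, hj⟩ := hit c u v ξ hu huv hv hξne hξsmall
  refine ⟨j * q.toNat, ?_⟩
  have hQ : ((q.toNat : ℕ) : ℝ) = (q : ℝ) := by
    exact_mod_cast congrArg (Int.cast : ℤ → ℝ) (Int.toNat_of_nonneg hq0.le)
  have : Int.fract (c + (j * q.toNat : ℕ) * θ) = Int.fract (c + j * ξ) := by
    apply Int.fract_eq_fract.mpr
    refine ⟨j * p, ?_⟩
    push_cast
    rw [hQ, hξdef]; ring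
  rwa [this]

/-- `round x` is the closest integer to `x`. -/
lemma round_min (x : ℝ) (w : ℤ) : |x - round x| ≤ |x - w| := by
  rcases le_or_gt (1/2) |x - (w:ℝ)| with h | h
  · exact (abs_sub_round x).trans h
  · have hw : round x = w := by
      have h1 : round ((x - w) + (w:ℝ)) = round (x - (w:ℝ)) + w := round_add_intCast _ _
      have h2 : round (x - (w:ℝ)) = 0 := by
        rw [round_eq_zero_iff]
        rw [abs_lt] at h
        exact ⟨by linarith, by linarith⟩
      rw [sub_add_cancel, h2, zero_add] at h1
      exact h1
    rw [hw]


/-- Let `θ > 0` be irrational, `C > 1` an integer, `0 < a < b < 1` with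
`b - a < 1/3`. Then there exist a positive integer `K`, a nonnegative integer `r`, and
infinitely many naturals `m` such that `{(K·C^m + r)·θ} < a` and `{(K·C^(m+1) + r)·θ} > b`. -/
theorem stmt8 (θ : ℝ) (hθpos : 0 < θ) (hθ : Irrational θ) (C : ℤ) (hC : 1 < C)
    (a b : ℝ) (ha : 0 < a) (hab : a < b) (hb : b < 1) (hgap : b - a < 1 / 3) :
    ∃ K : ℕ, 0 < K ∧ ∃ r : ℕ,
      {m : ℕ | Int.fract (((K : ℝ) * (C : ℝ) ^ m + (r : ℝ)) * θ) < a ∧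
        b < Int.fract (((K : ℝ) * (C : ℝ) ^ (m + 1) + (r : ℝ)) * θ)}.Infinite := by
  classical
  have hC1 : (1:ℝ) < (C:ℝ) := by exact_mod_cast hC
  set ε : ℝ := 1/(2*(C:ℝ)) with hε
  have hεpos : 0 < ε := by rw [hε]; positivity
  set x : ℕ → ℝ := fun m => ((C:ℝ) - 1) * (C:ℝ)^m * θ with hx
  set g : ℕ → ℝ := fun m => |x m - round (x m)| with hg
  -- Step: doubling of the distance to ℤ
  have hstep : ∀ m, g m < ε → g (m+1) = (C:ℝ) * g m := by
    intro m h
    have hxm : x (m+1) = (C:ℝ) * x m := by rw [hx]; simp only; rw [pow_succ]; ring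
    have habs : |(C:ℝ) * (x m - round (x m))| < 1/2 := by
      rw [abs_mul, abs_of_pos (by linarith : (0:ℝ) < (C:ℝ))]
      have : g m < 1/(2*(C:ℝ)) := h
      rw [hg] at this; simp only at this
      calc (C:ℝ) * |x m - round (x m)| < (C:ℝ) * (1/(2*(C:ℝ))) := by
            apply mul_lt_mul_of_pos_left _ (by linarith); exact this
        _ = 1/2 := by field_simp
    have hround : round (x (m+1)) = C * round (x m) := by
      have h1 : x (m+1) = (C:ℝ) * (x m - round (x m)) + ((C * round (x m) : ℤ) : ℝ) := by
        push_cast; rw [hxm]; ring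
      rw [h1, round_add_intCast]
      have h2 : round ((C:ℝ) * (x m - round (x m))) = 0 := by
        rw [round_eq_zero_iff]
        rw [abs_lt] at habs
        exact ⟨by linarith [habs.1], by linarith [habs.2]⟩
      rw [h2, zero_add]
    rw [hg]; simp only
    rw [hround, hxm]
    push_cast
    rw [show (C:ℝ) * x m - (C:ℝ) * (round (x m) : ℝ) = (C:ℝ) * (x m - round (x m)) by ring,
      abs_mul, abs_of_pos (by linarith : (0:ℝ) < (C:ℝ))]
  -- Infinitely many m stay far from ℤ
  have hinf : {m : ℕ | ε ≤ g m}.Infinite := by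
    by_contra hfin
    rw [Set.not_infinite] at hfin
    obtain ⟨m₀, hm₀⟩ : ∃ m₀, ∀ m, m₀ ≤ m → g m < ε := by
      obtain ⟨M, hM⟩ := hfin.bddAbove
      refine ⟨M+1, fun m hm => ?_⟩
      by_contra hge; push_neg at hge
      have := hM (show m ∈ {m : ℕ | ε ≤ g m} from hge)
      omega
    have hpow : ∀ k, g (m₀ + k) = (C:ℝ)^k * g m₀ := by
      intro k; induction k with
      | zero => simp
      | succ k ih =>
        have : m₀ + (k+1) = (m₀ + k) + 1 := rfl
        rw [this, hstep _ (hm₀ _ (by omega)), ih, pow_succ]; ring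
    have hzero : g m₀ = 0 := by
      by_contra hne
      have hgpos : 0 < g m₀ := (abs_nonneg _).lt_of_ne (Ne.symm hne)
      obtain ⟨k, hk⟩ := pow_unbounded_of_one_lt (ε / g m₀) hC1
      have hlt := hm₀ (m₀ + k) (by omega)
      rw [hpow k] at hlt
      rw [div_lt_iff₀ hgpos] at hk
      linarith
    have hxint : x m₀ = ((round (x m₀) : ℤ) : ℝ) := by
      have := abs_eq_zero.mp hzero
      linarith [sub_eq_zero.mp this]
    set d : ℤ := (C - 1) * C^m₀ with hd
    have hdpos : 0 < d := by
      apply mul_pos (by omega) (pow_pos (by omega) _)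
    have hdR : (d:ℝ) = ((C:ℝ) - 1) * (C:ℝ)^m₀ := by rw [hd]; push_cast; ring
    have hdR0 : (d:ℝ) ≠ 0 := by
      have : (0:ℝ) < (d:ℝ) := by exact_mod_cast hdpos
      exact this.ne'
    have hθeq : θ = ((round (x m₀) : ℤ) : ℝ) / (d:ℝ) := by
      have hx0 : ((C:ℝ) - 1) * (C:ℝ)^m₀ * θ = ((round (x m₀) : ℤ) : ℝ) := hxint
      rw [eq_div_iff hdR0, hdR]
      linear_combination hx0
    exact hθ ⟨((round (x m₀) : ℤ) : ℚ) / ((d : ℤ) : ℚ), by push_cast; rw [hθeq]⟩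
  -- Extract a limit point β of fract (C^m θ) along the good set
  set v : ℕ → ℝ := fun m => Int.fract ((C:ℝ)^m * θ) with hv
  set P : ℕ → Prop := fun m => ε ≤ g m with hP
  have hinf' : (setOf P).Infinite := hinf
  have hmem : ∀ n : ℕ, v (Nat.nth P n) ∈ Set.Icc (0:ℝ) 1 :=
    fun n => ⟨Int.fract_nonneg _, (Int.fract_lt_one _).le⟩
  obtain ⟨β, hβmem, φ, hφ, hβtend⟩ :=
    tendsto_subseq_of_bounded (Metric.isBounded_Icc (0:ℝ) 1) hmem
  set σ : ℕ → ℕ := fun n => Nat.nth P (φ n) with hσdef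
  have hσ : StrictMono σ := (Nat.nth_strictMono hinf').comp hφ
  have htend : Tendsto (fun n => v (σ n)) atTop (𝓝 β) := hβtend
  -- β is far from the grid ℤ/(C-1)
  have hβfar : ∀ z : ℤ, ε ≤ |((C:ℝ) - 1) * β - z| := by
    intro z
    have hterm : ∀ n, ε ≤ |((C:ℝ) - 1) * v (σ n) - z| := by
      intro n
      have hPn : ε ≤ g (σ n) := Nat.nth_mem_of_infinite hinf' (φ n)
      have hxv : ((C:ℝ) - 1) * v (σ n) - z
          = x (σ n) - (((C - 1) * ⌊(C:ℝ)^(σ n) * θ⌋ + z : ℤ) : ℝ) := by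
        rw [hv, hx]; simp only [Int.fract]
        push_cast; ring
      rw [hxv]
      exact hPn.trans (round_min _ _)
    have hlim : Tendsto (fun n => |((C:ℝ) - 1) * v (σ n) - z|) atTop
        (𝓝 |((C:ℝ) - 1) * β - z|) := ((htend.const_mul _).sub_const _).abs
    exact ge_of_tendsto' hlim hterm
  set t : ℝ := Int.fract (((C:ℝ) - 1) * β) with ht
  have hεt : ε ≤ t := by
    have h := hβfar ⌊((C:ℝ) - 1) * β⌋
    rwa [abs_of_nonneg (by
      linarith [Int.floor_le (((C:ℝ) - 1) * β)])] at h
  have ht0 : 0 < t := lt_of_lt_of_le hεpos hεt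
  have ht1 : t < 1 := Int.fract_lt_one _
  -- Choose K minimal positive with b - a < K t
  have hba : 0 < b - a := by linarith
  have hexK : ∃ n : ℕ, b - a < ((n:ℝ) + 1) * t := by
    obtain ⟨n, hn⟩ := exists_nat_gt ((b - a) / t)
    refine ⟨n, ?_⟩
    rw [div_lt_iff₀ ht0] at hn
    nlinarith
  set n := Nat.find hexK with hn
  set K : ℕ := n + 1 with hK
  set δ : ℝ := (K:ℝ) * t with hδ
  have hKR : (K:ℝ) = (n:ℝ) + 1 := by rw [hK]; push_cast; ring
  have hδba : b - a < δ := by rw [hδ, hKR]; exact Nat.find_spec hexK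
  have hδpos : 0 < δ := by positivity
  have hδ1 : δ < 1 := by
    rcases Nat.eq_zero_or_pos n with h0 | h1
    · rw [hδ, hKR, h0]; push_cast; linarith
    · have hnot : ¬ (b - a < (((n-1:ℕ):ℝ) + 1) * t) := Nat.find_min hexK (by omega)
      push_neg at hnot
      have hcast : (((n-1:ℕ):ℝ) + 1) = (n:ℝ) := by
        have : (1:ℕ) ≤ n := h1
        push_cast [this]; ring
      rw [hcast] at hnot
      have htn : t ≤ (n:ℝ) * t := by
        have h1' : (1:ℝ) ≤ (n:ℝ) := by exact_mod_cast h1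
        nlinarith
      rw [hδ, hKR]
      nlinarith
  -- Choose r with fract(Kβ + rθ) in (max (b-δ) 0, min a (1-δ))
  set L : ℝ := max (b - δ) 0 with hL
  set U : ℝ := min a (1 - δ) with hU
  have hLU : L < U := by
    apply max_lt
    · apply lt_min <;> linarith
    · apply lt_min <;> linarith
  obtain ⟨r, hr⟩ := dense_nat_rotation θ hθ ((K:ℝ) * β) L U (le_max_right _ _) hLU
    ((min_le_left _ _).trans (by linarith))
  set Ly : ℝ := Int.fract ((K:ℝ) * β + r * θ) with hLy
  have hy1 : L < Ly := hr.1
  have hy2 : Ly < U := hr.2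
  have hy0 : 0 < Ly := lt_of_le_of_lt (le_max_right _ _) hy1
  have hya : Ly < a := lt_of_lt_of_le hy2 (min_le_left _ _)
  have hyb : b < Ly + δ := by
    have : b - δ ≤ L := le_max_left _ _
    linarith
  have hy1' : Ly + δ < 1 := by
    have : U ≤ 1 - δ := min_le_right _ _
    linarith
  -- fract at the limit points
  set A : ℝ := (K:ℝ) * β + r * θ with hA
  have hAfl : A ≠ (⌊A⌋ : ℝ) := by
    intro h
    have : Int.fract A = 0 := by rw [Int.fract, h]; simp
    rw [← hLy] at this
    linarith [this ▸ hy0]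
  set B : ℝ := (K:ℝ) * (C:ℝ) * β + r * θ with hB
  have hfB : Int.fract B = Ly + δ := by
    have hwit : B - (Ly + δ) = ((⌊A⌋ + (K:ℤ) * ⌊((C:ℝ) - 1) * β⌋ : ℤ) : ℝ) := by
      have e1 : A - Ly = ((⌊A⌋ : ℤ) : ℝ) := by rw [hLy]; exact Int.self_sub_fract A
      have e2 : ((C:ℝ) - 1) * β - t = ((⌊((C:ℝ) - 1) * β⌋ : ℤ) : ℝ) := by
        rw [ht]; exact Int.self_sub_fract _
      push_cast
      rw [hA] at e1 ⊢
      rw [hB, hδ]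
      linear_combination e1 + (K:ℝ) * e2
    have h1 : Int.fract B = Int.fract (Ly + δ) := Int.fract_eq_fract.mpr ⟨_, hwit⟩
    rw [h1, Int.fract_eq_self.mpr ⟨by linarith, hy1'⟩]
  have hBfl : B ≠ (⌊B⌋ : ℝ) := by
    intro h
    have : Int.fract B = 0 := by rw [Int.fract, h]; simp
    rw [hfB] at this
    linarith
  -- limits of the two sequences
  have hy_tend : Tendsto (fun n' => Int.fract ((K:ℝ) * v (σ n') + r * θ)) atTop (𝓝 Ly) := by
    have h1 : Tendsto (fun n' => (K:ℝ) * v (σ n') + r * θ) atTop (𝓝 A) :=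
      (htend.const_mul _).add_const _
    have h2 := (continuousAt_fract hAfl).tendsto.comp h1
    rwa [show Int.fract A = Ly from rfl] at h2
  have hz_tend : Tendsto (fun n' => Int.fract ((K:ℝ) * (C:ℝ) * v (σ n') + r * θ)) atTop
      (𝓝 (Ly + δ)) := by
    have h1 : Tendsto (fun n' => (K:ℝ) * (C:ℝ) * v (σ n') + r * θ) atTop (𝓝 B) :=
      (htend.const_mul _).add_const _
    have h2 := (continuousAt_fract hBfl).tendsto.comp h1
    rwa [hfB] at h2
  have evy := hy_tend.eventually_lt_const hya
  have evz := hz_tend.eventually_const_lt hyb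
  obtain ⟨N, hN⟩ := (evy.and evz).exists_forall_of_atTop
  -- rewriting the statement's fractional parts
  have hrw1 : ∀ m : ℕ, Int.fract (((K:ℝ) * (C:ℝ)^m + (r:ℝ)) * θ)
      = Int.fract ((K:ℝ) * v m + r * θ) := by
    intro m
    apply Int.fract_eq_fract.mpr
    refine ⟨(K:ℤ) * ⌊(C:ℝ)^m * θ⌋, ?_⟩
    rw [hv]; simp only [Int.fract]; push_cast; ring
  have hrw2 : ∀ m : ℕ, Int.fract (((K:ℝ) * (C:ℝ)^(m+1) + (r:ℝ)) * θ)
      = Int.fract ((K:ℝ) * (C:ℝ) * v m + r * θ) := by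
    intro m
    apply Int.fract_eq_fract.mpr
    refine ⟨(K:ℤ) * C * ⌊(C:ℝ)^m * θ⌋, ?_⟩
    rw [hv]; simp only [Int.fract]; push_cast; rw [pow_succ]; ring
  refine ⟨K, Nat.succ_pos n, r, ?_⟩
  apply Set.infinite_of_injective_forall_mem (f := fun i : ℕ => σ (i + N))
  · intro i j h
    have := hσ.injective h
    omega
  · intro i
    simp only [Set.mem_setOf_eq]
    rw [hrw1, hrw2]
    exact hN (i + N) (by omega)
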